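/- Let λ₁ = √(4B² + J²γ̃²) with J, B ≥ 0, 0 ≤ γ̃ ≤ 1, λ₁ > 0. The ground state Ψ = ∓√((λ₁ ∓ 2B)/(2λ₁))|00⟩ + √((λ₁ ± 2B)/(2λ₁))|11⟩ has concurrence C(Ψ) = √((λ₁² − 4B²)/λ₁²) and maximal Bell violation γ = 2√(1 + (λ₁² − 4B²)/λ₁²) = 2√(1 + C²). -/

import Mathlib

open Matrix Kronecker

/-- The three Pauli matrices `σ_x, σ_y, σ_z`. -/
noncomputable def pauli : Fin 3 → Matrix (Fin 2) (Fin 2) ℂ :=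
  ![!![0, 1; 1, 0], !![0, -Complex.I; Complex.I, 0], !![1, 0; 0, -1]]

/-- `a · σ` for a real 3-vector `a`. -/
noncomputable def dotPauli (a : Fin 3 → ℝ) : Matrix (Fin 2) (Fin 2) ℂ :=
  ∑ i, (a i : ℂ) • pauli i

/-- The CHSH-Bell expectation `⟨ψ| a·σ⊗b·σ + a·σ⊗b'·σ + a'·σ⊗b·σ − a'·σ⊗b'·σ |ψ⟩`. -/
noncomputable def bellExp (ψ : Fin 2 × Fin 2 → ℂ) (a a' b b' : Fin 3 → ℝ) : ℝ :=
  (star ψ ⬝ᵥ ((dotPauli a ⊗ₖ dotPauli b + dotPauli a ⊗ₖ dotPauli b' +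
      dotPauli a' ⊗ₖ dotPauli b - dotPauli a' ⊗ₖ dotPauli b').mulVec ψ)).re

lemma corr (α β : ℝ) (a b : Fin 3 → ℝ) :
    (star (fun p : Fin 2 × Fin 2 => if p = (0,0) then ((α:ℝ):ℂ) else if p = (1,1) then ((β:ℝ):ℂ) else 0)
      ⬝ᵥ ((dotPauli a ⊗ₖ dotPauli b).mulVec
        (fun p : Fin 2 × Fin 2 => if p = (0,0) then ((α:ℝ):ℂ) else if p = (1,1) then ((β:ℝ):ℂ) else 0))).re
    = (α^2+β^2) * (a 2 * b 2) + 2*α*β*(a 0 * b 0 - a 1 * b 1) := by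
  simp [dotProduct, mulVec, Fintype.sum_prod_type, Fin.sum_univ_two, dotPauli, pauli,
    Fin.sum_univ_three, kroneckerMap_apply, Prod.ext_iff, Complex.ext_iff]
  ring

lemma bell_eval (α β : ℝ) (a a' b b' : Fin 3 → ℝ) :
    bellExp (fun p : Fin 2 × Fin 2 =>
        if p = (0,0) then ((α:ℝ):ℂ) else if p = (1,1) then ((β:ℝ):ℂ) else 0) a a' b b'
      = (a 0*((2*α*β)*(b 0+b' 0)) + a 1*(-((2*α*β)*(b 1+b' 1))) + (α^2+β^2)*(a 2*(b 2+b' 2)))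
        + (a' 0*((2*α*β)*(b 0-b' 0)) + a' 1*(-((2*α*β)*(b 1-b' 1)))
            + (α^2+β^2)*(a' 2*(b 2-b' 2))) := by
  unfold bellExp
  simp only [Matrix.add_mulVec, Matrix.sub_mulVec, dotProduct_add, dotProduct_sub,
    Complex.add_re, Complex.sub_re, corr]
  ring

lemma cs3 (a₀ a₁ a₂ w₀ w₁ w₂ : ℝ) (h : a₀^2+a₁^2+a₂^2 = 1) :
    a₀*w₀+a₁*w₁+a₂*w₂ ≤ Real.sqrt (w₀^2+w₁^2+w₂^2) := by
  have h1 : (a₀*w₀+a₁*w₁+a₂*w₂)^2 ≤ w₀^2+w₁^2+w₂^2 := by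
    nlinarith [sq_nonneg (a₀*w₁-a₁*w₀), sq_nonneg (a₀*w₂-a₂*w₀), sq_nonneg (a₁*w₂-a₂*w₁),
      sq_nonneg a₀, sq_nonneg a₁, sq_nonneg a₂]
  calc a₀*w₀+a₁*w₁+a₂*w₂ ≤ |a₀*w₀+a₁*w₁+a₂*w₂| := le_abs_self _
    _ = Real.sqrt ((a₀*w₀+a₁*w₁+a₂*w₂)^2) := (Real.sqrt_sq_eq_abs _).symm
    _ ≤ _ := Real.sqrt_le_sqrt h1

lemma key (c u₀ u₁ u₂ v₀ v₁ v₂ : ℝ) (hc : c^2 ≤ 1)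
    (horth : u₀*v₀+u₁*v₁+u₂*v₂ = 0)
    (hsum : (u₀^2+u₁^2+u₂^2) + (v₀^2+v₁^2+v₂^2) = 4) :
    Real.sqrt (c^2*u₀^2+c^2*u₁^2+u₂^2) + Real.sqrt (c^2*v₀^2+c^2*v₁^2+v₂^2)
      ≤ 2 * Real.sqrt (1+c^2) := by
  have hX0 : (0:ℝ) ≤ c^2*u₀^2+c^2*u₁^2+u₂^2 := by positivity
  have hY0 : (0:ℝ) ≤ c^2*v₀^2+c^2*v₁^2+v₂^2 := by positivity
  have h2 : (u₀*v₀+u₁*v₁)^2 = (u₂*v₂)^2 := by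
    have : u₀*v₀+u₁*v₁ = -(u₂*v₂) := by linarith
    rw [this]; ring
  have hBessel : u₂^2*v₂^2 ≤ (u₀^2+u₁^2)*(v₀^2+v₁^2) := by
    nlinarith [sq_nonneg (u₀*v₁-u₁*v₀), h2]
  have hpq4 : u₂^2 + v₂^2 ≤ 4 := by
    nlinarith [sq_nonneg u₀, sq_nonneg u₁, sq_nonneg v₀, sq_nonneg v₁]
  have hrhs0 : 0 ≤ 4 - (1-c^2)*(u₂^2+v₂^2) := by
    nlinarith [sq_nonneg u₂, sq_nonneg v₂, sq_nonneg c]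
  have hkey : 4*((c^2*u₀^2+c^2*u₁^2+u₂^2)*(c^2*v₀^2+c^2*v₁^2+v₂^2))
      ≤ (4 - (1-c^2)*(u₂^2+v₂^2))^2 := by
    nlinarith [sq_nonneg ((u₀^2+u₁^2) - (v₀^2+v₁^2) + c^2*(u₂^2-v₂^2)),
      mul_nonneg (mul_nonneg (by nlinarith [sq_nonneg c] : (0:ℝ) ≤ 1-c^4) (by positivity : (0:ℝ) ≤ (4:ℝ)))
        (by nlinarith : (0:ℝ) ≤ (u₀^2+u₁^2)*(v₀^2+v₁^2) - u₂^2*v₂^2), hsum]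
  have hsqXY : Real.sqrt (c^2*u₀^2+c^2*u₁^2+u₂^2) * Real.sqrt (c^2*v₀^2+c^2*v₁^2+v₂^2)
      ≤ (4 - (1-c^2)*(u₂^2+v₂^2))/2 := by
    rw [← Real.sqrt_mul hX0]
    calc Real.sqrt _ ≤ Real.sqrt (((4 - (1-c^2)*(u₂^2+v₂^2))/2)^2) :=
          Real.sqrt_le_sqrt (by nlinarith)
      _ = |(4 - (1-c^2)*(u₂^2+v₂^2))/2| := Real.sqrt_sq_eq_abs _
      _ = (4 - (1-c^2)*(u₂^2+v₂^2))/2 := abs_of_nonneg (by linarith)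
  have hgoal2 : (Real.sqrt (c^2*u₀^2+c^2*u₁^2+u₂^2) + Real.sqrt (c^2*v₀^2+c^2*v₁^2+v₂^2))^2
      ≤ 4*(1+c^2) := by
    have hXY : (c^2*u₀^2+c^2*u₁^2+u₂^2) + (c^2*v₀^2+c^2*v₁^2+v₂^2)
        = 4*c^2 + (1-c^2)*(u₂^2+v₂^2) := by linear_combination c^2*hsum
    rw [add_sq, Real.sq_sqrt hX0, Real.sq_sqrt hY0]
    linarith [hsqXY, hXY]
  have h2' : 2 * Real.sqrt (1+c^2) = Real.sqrt (4*(1+c^2)) := by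
    rw [show (4:ℝ)*(1+c^2) = 2^2*(1+c^2) by ring, Real.sqrt_mul (by positivity),
      Real.sqrt_sq (by norm_num)]
  rw [h2']
  exact (Real.le_sqrt (by positivity) (by positivity)).mpr hgoal2

set_option maxHeartbeats 1000000 in
theorem stmt_14 (J B γt l₁ : ℝ) (hJ : 0 ≤ J) (hB : 0 ≤ B) (hγ0 : 0 ≤ γt) (hγ1 : γt ≤ 1)
    (hl : l₁ = Real.sqrt (4 * B ^ 2 + J ^ 2 * γt ^ 2)) (hlpos : 0 < l₁)
    (s : ℝ) (hs : s = 1 ∨ s = -1) :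
    Real.sqrt (2 * (1 - (-(s) * Real.sqrt ((l₁ - s * (2 * B)) / (2 * l₁))) ^ 4 -
        (Real.sqrt ((l₁ + s * (2 * B)) / (2 * l₁))) ^ 4)) =
      Real.sqrt ((l₁ ^ 2 - 4 * B ^ 2) / l₁ ^ 2) ∧
    IsGreatest {γ : ℝ | ∃ a a' b b' : Fin 3 → ℝ,
        a ⬝ᵥ a = 1 ∧ a' ⬝ᵥ a' = 1 ∧ b ⬝ᵥ b = 1 ∧ b' ⬝ᵥ b' = 1 ∧
        γ = bellExp (fun p =>
          if p = (0, 0) then ((-(s) * Real.sqrt ((l₁ - s * (2 * B)) / (2 * l₁)) : ℝ) : ℂ)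
          else if p = (1, 1) then ((Real.sqrt ((l₁ + s * (2 * B)) / (2 * l₁)) : ℝ) : ℂ)
          else 0) a a' b b'}
      (2 * Real.sqrt (1 + (l₁ ^ 2 - 4 * B ^ 2) / l₁ ^ 2)) ∧
    2 * Real.sqrt (1 + (l₁ ^ 2 - 4 * B ^ 2) / l₁ ^ 2) =
      2 * Real.sqrt (1 + (Real.sqrt ((l₁ ^ 2 - 4 * B ^ 2) / l₁ ^ 2)) ^ 2) := by
  have hs2 : s^2 = 1 := by rcases hs with h | h <;> rw [h] <;> norm_num
  have hsle : s ≤ 1 := by rcases hs with h | h <;> rw [h] <;> norm_num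
  have hsge : -1 ≤ s := by rcases hs with h | h <;> rw [h] <;> norm_num
  have hl2 : l₁^2 = 4*B^2 + J^2*γt^2 := by
    rw [hl, Real.sq_sqrt (by positivity)]
  have h4B : 4*B^2 ≤ l₁^2 := by nlinarith [sq_nonneg (J*γt)]
  have h2B : 2*B ≤ l₁ := by nlinarith
  have hsB : s*(2*B) ≤ l₁ := by nlinarith
  have hsB' : -(l₁) ≤ s*(2*B) := by nlinarith
  set A : ℝ := (l₁ - s * (2 * B)) / (2 * l₁) with hA
  set A' : ℝ := (l₁ + s * (2 * B)) / (2 * l₁) with hA'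
  have hA0 : 0 ≤ A := by apply div_nonneg <;> linarith
  have hA'0 : 0 ≤ A' := by apply div_nonneg <;> linarith
  set α : ℝ := -(s) * Real.sqrt A with hαdef
  set β : ℝ := Real.sqrt A' with hβdef
  have hα2 : α^2 = A := by
    rw [hαdef, show (-(s) * Real.sqrt A)^2 = s^2 * (Real.sqrt A)^2 by ring, hs2,
      Real.sq_sqrt hA0, one_mul]
  have hβ2 : β^2 = A' := Real.sq_sqrt hA'0
  have hl0 : l₁ ≠ 0 := ne_of_gt hlpos
  have hAA'1 : A + A' = 1 := by rw [hA, hA']; field_simp; ring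
  have hsum1 : α^2 + β^2 = 1 := by rw [hα2, hβ2]; exact hAA'1
  set C2 : ℝ := (l₁ ^ 2 - 4 * B ^ 2) / l₁ ^ 2 with hC2def
  have hC20 : 0 ≤ C2 := by apply div_nonneg <;> nlinarith
  have hC21 : C2 ≤ 1 := by
    rw [hC2def, div_le_one (by positivity)]; nlinarith
  have h4AB : 4*(A*A') = C2 := by
    rw [hA, hA', hC2def]; field_simp; linear_combination (-(16)*B^2) * hs2
  set c : ℝ := 2*α*β with hcdef
  have hc2 : c^2 = C2 := by
    have hm : Real.sqrt A * Real.sqrt A' = Real.sqrt (A*A') := (Real.sqrt_mul hA0 _).symm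
    have h4 : Real.sqrt C2 = 2 * Real.sqrt (A*A') := by
      rw [← h4AB, show (4:ℝ)*(A*A') = 2^2*(A*A') by ring,
        Real.sqrt_mul (by positivity), Real.sqrt_sq (by norm_num : (0:ℝ) ≤ 2)]
    have hc : c = -(s) * Real.sqrt C2 := by
      rw [hcdef, hαdef, hβdef, h4, ← hm]; ring
    rw [hc, show (-(s) * Real.sqrt C2)^2 = s^2 * (Real.sqrt C2)^2 by ring, hs2,
      Real.sq_sqrt hC20, one_mul]
  refine ⟨?_, ⟨?_, ?_⟩, ?_⟩
  · -- concurrence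
    rw [show 2*(1 - α^4 - β^4) = C2 from by
      rw [show α^4 = (α^2)^2 by ring, show β^4 = (β^2)^2 by ring, hα2, hβ2, ← h4AB]
      linear_combination (-2*(A+A'+1))*hAA'1]
  · -- membership
    set r : ℝ := Real.sqrt (1 + c^2) with hrdef
    have hr2 : r^2 = 1 + c^2 := Real.sq_sqrt (by positivity)
    have hr0 : 0 < r := by rw [hrdef]; positivity
    have hrne : r ≠ 0 := ne_of_gt hr0
    refine ⟨![0,0,1], ![1,0,0], ![c/r, 0, 1/r], ![-(c/r), 0, 1/r], ?_, ?_, ?_, ?_, ?_⟩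
    · simp [dotProduct, Fin.sum_univ_three]
    · simp [dotProduct, Fin.sum_univ_three]
    · simp only [dotProduct, Fin.sum_univ_three, Matrix.cons_val_zero, Matrix.cons_val_one,
        Matrix.head_cons, Matrix.cons_val_two, Matrix.tail_cons]
      field_simp
      linear_combination -hr2
    · simp only [dotProduct, Fin.sum_univ_three, Matrix.cons_val_zero, Matrix.cons_val_one,
        Matrix.head_cons, Matrix.cons_val_two, Matrix.tail_cons]
      field_simp
      linear_combination -hr2
    · rw [bell_eval α β, hsum1, ← hcdef]
      simp only [Matrix.cons_val_zero, Matrix.cons_val_one, Matrix.head_cons,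
        Matrix.cons_val_two, Matrix.tail_cons, one_mul, zero_mul, mul_zero,
        add_zero, zero_add]
      rw [← hc2, ← hrdef]
      field_simp
      linear_combination 2 * hr2
  · -- upper bound
    rintro γ ⟨a, a', b, b', ha, ha', hb, hb', rfl⟩
    have conv : ∀ x : Fin 3 → ℝ, x ⬝ᵥ x = 1 → x 0^2 + x 1^2 + x 2^2 = 1 := by
      intro x hx
      simp only [dotProduct, Fin.sum_univ_three] at hx
      linear_combination hx
    have ha2 := conv a ha
    have ha'2 := conv a' ha'
    have hb2 := conv b hb
    have hb'2 := conv b' hb'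
    rw [bell_eval α β, hsum1, ← hcdef, one_mul, one_mul]
    have hcc : c^2 ≤ 1 := by rw [hc2]; exact hC21
    have t1 : a 0*(c*(b 0+b' 0)) + a 1*(-(c*(b 1+b' 1))) + a 2*(b 2+b' 2)
        ≤ Real.sqrt (c^2*(b 0+b' 0)^2 + c^2*(b 1+b' 1)^2 + (b 2+b' 2)^2) := by
      calc _ ≤ Real.sqrt ((c*(b 0+b' 0))^2 + (-(c*(b 1+b' 1)))^2 + (b 2+b' 2)^2) :=
            cs3 (a 0) (a 1) (a 2) (c*(b 0+b' 0)) (-(c*(b 1+b' 1))) (b 2+b' 2) ha2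
        _ = _ := by rw [show (c*(b 0+b' 0))^2 + (-(c*(b 1+b' 1)))^2 + (b 2+b' 2)^2
              = c^2*(b 0+b' 0)^2 + c^2*(b 1+b' 1)^2 + (b 2+b' 2)^2 by ring]
    have t2 : a' 0*(c*(b 0-b' 0)) + a' 1*(-(c*(b 1-b' 1))) + a' 2*(b 2-b' 2)
        ≤ Real.sqrt (c^2*(b 0-b' 0)^2 + c^2*(b 1-b' 1)^2 + (b 2-b' 2)^2) := by
      calc _ ≤ Real.sqrt ((c*(b 0-b' 0))^2 + (-(c*(b 1-b' 1)))^2 + (b 2-b' 2)^2) :=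
            cs3 (a' 0) (a' 1) (a' 2) (c*(b 0-b' 0)) (-(c*(b 1-b' 1))) (b 2-b' 2) ha'2
        _ = _ := by rw [show (c*(b 0-b' 0))^2 + (-(c*(b 1-b' 1)))^2 + (b 2-b' 2)^2
              = c^2*(b 0-b' 0)^2 + c^2*(b 1-b' 1)^2 + (b 2-b' 2)^2 by ring]
    have hkey := key c (b 0+b' 0) (b 1+b' 1) (b 2+b' 2) (b 0-b' 0) (b 1-b' 1) (b 2-b' 2) hcc
      (by linear_combination hb2 - hb'2) (by linear_combination 2*hb2 + 2*hb'2)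
    rw [← hc2]
    linarith [t1, t2, hkey]
  · -- final equality
    rw [Real.sq_sqrt hC20]
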